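/- Define, for isomorphic levellised n-lattices, the relation L₁ < L₂ by recursion on n: L₁ < L₂ iff L₁' < L₂' (where L' removes the deepest nonzero level), or L₁' = L₂' and the level-major lexicographic comparison of the levellised covering weights of the elements of the deepest level of L₁ is smaller than that of L₂. Then < is a strict total order (transitive and satisfying trichotomy) on each set of pairwise-isomorphic levellised n-lattices. -/

import Mathlib

namespace PaperLattice

variable {N : ℕ}

/-- Depth: one less than the maximum length of a chain from `t` down to `a` w.r.t. `le`. -/
noncomputable def dep (le : Fin N → Fin N → Prop) (t a : Fin N) : ℕ :=
  sSup {k | ∃ l : List (Fin N), List.Chain' (fun x y => le y x ∧ y ≠ x) l ∧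
    l.head? = some t ∧ l.getLast? = some a ∧ l.length = k + 1}

/-- The `d`-th level: elements of depth `d`. -/
noncomputable def lev (le : Fin N → Fin N → Prop) (t : Fin N) (d : ℕ) : Set (Fin N) :=
  {a | dep le t a = d}

/-- A labelled poset is levellised if depth is monotone in the nonzero labels. -/
def Levellised (le : Fin N → Fin N → Prop) (t : Fin N) : Prop :=
  ∀ i j : Fin N, 0 < (i : ℕ) → (i : ℕ) ≤ (j : ℕ) → dep le t i ≤ dep le t j

def lt' (le : Fin N → Fin N → Prop) (a b : Fin N) : Prop := le a b ∧ a ≠ b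

/-- `b` covers `a`. -/
def CovByRel (le : Fin N → Fin N → Prop) (a b : Fin N) : Prop :=
  lt' le a b ∧ ∀ x, lt' le a x → lt' le x b → False

/-- The covering set of `a`. -/
def cov (le : Fin N → Fin N → Prop) (a : Fin N) : Set (Fin N) := {b | CovByRel le a b}

/-- The up-set of `A`. -/
def upset (le : Fin N → Fin N → Prop) (A : Set (Fin N)) : Set (Fin N) :=
  {x | ∃ a ∈ A, le a x}

def AntichainRel (le : Fin N → Fin N → Prop) (A : Set (Fin N)) : Prop :=
  ∀ a ∈ A, ∀ b ∈ A, a ≠ b → ¬ le a b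

/-- Binary weight of a set of labels. -/
noncomputable def wt (A : Set (Fin N)) : ℕ :=
  ∑ j : Fin N, A.indicator (fun j => 2 ^ (j : ℕ)) j

/-- `z` is a bottom and `o` a top for `le`. -/
def Bounds (le : Fin N → Fin N → Prop) (z o : Fin N) : Prop :=
  (∀ a, le z a) ∧ (∀ a, le a o)

/-- The order obtained from `le` by adding `m` new atoms, the `i`-th having covering set `A i`. -/
def extLe {n m : ℕ} (le : Fin n → Fin n → Prop) (A : Fin m → Set (Fin n)) :
    Fin (n + m) → Fin (n + m) → Prop := fun x y =>
  if hx : (x : ℕ) < n then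
    if hy : (y : ℕ) < n then le ⟨x, hx⟩ ⟨y, hy⟩
    else (x : ℕ) = 0
  else
    if hy : (y : ℕ) < n then
      (⟨y, hy⟩ : Fin n) ∈ upset le (A ⟨(x : ℕ) - n, by have := x.isLt; omega⟩)
    else x = y

/-- The relabelled order `π(L)`. -/
def permLe {n : ℕ} (π : Equiv.Perm (Fin n)) (le : Fin n → Fin n → Prop) :
    Fin n → Fin n → Prop := fun a b => le (π.symm a) (π.symm b)


/-- The weight of the part of the covering set of `i` lying on level `d`. -/
noncomputable def covwt {N : ℕ} (le : Fin N → Fin N → Prop) (t : Fin N) (d : ℕ)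
    (i : Fin N) : ℕ :=
  wt (cov le i ∩ lev le t d)

/-- The level-major order on levellised labelled lattices: `L₁ < L₂` iff at the first
position — blocks of elements ordered by increasing depth, within a block levels `d`
of the covering sets in decreasing order, within a level elements in increasing label
order — the covering weight of `L₁` is smaller than that of `L₂`. -/
noncomputable def ltLM {N : ℕ} (L₁ L₂ : Lattice (Fin N)) (t : Fin N) : Prop :=
  ∃ (i : Fin N) (d : ℕ), 0 < (i : ℕ) ∧ 1 ≤ d ∧ d < dep L₁.le t i ∧
    covwt L₁.le t d i < covwt L₂.le t d i ∧
    ∀ (j : Fin N) (e : ℕ), 0 < (j : ℕ) → 1 ≤ e → e < dep L₁.le t j →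
      (dep L₁.le t j < dep L₁.le t i ∨
        (dep L₁.le t j = dep L₁.le t i ∧ d < e) ∨
        (dep L₁.le t j = dep L₁.le t i ∧ e = d ∧ (j : ℕ) < (i : ℕ))) →
      covwt L₁.le t e j = covwt L₂.le t e j

/-! ### Auxiliary machinery -/

/-- Basic partial-order facts for a raw relation. -/
structure POr (le : Fin N → Fin N → Prop) : Prop where
  refl : ∀ a, le a a
  trans : ∀ {a b c}, le a b → le b c → le a c
  antisymm : ∀ {a b}, le a b → le b a → a = b

lemma lattice_por {n : ℕ} (L : Lattice (Fin n)) : POr L.le :=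
  ⟨fun a => L.le_refl a, fun h h' => L.le_trans _ _ _ h h',
    fun h h' => L.le_antisymm _ _ h h'⟩

/-- The set appearing in `dep`. -/
def depSet (le : Fin N → Fin N → Prop) (t a : Fin N) : Set ℕ :=
  {k | ∃ l : List (Fin N), List.Chain' (fun x y => le y x ∧ y ≠ x) l ∧
    l.head? = some t ∧ l.getLast? = some a ∧ l.length = k + 1}

lemma dep_eq_sSup (le : Fin N → Fin N → Prop) (t a : Fin N) :
    dep le t a = sSup (depSet le t a) := rfl

lemma sdr_trans {le : Fin N → Fin N → Prop} (P : POr le) :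
    IsTrans (Fin N) (fun x y : Fin N => le y x ∧ y ≠ x) := by
  constructor
  rintro a b c ⟨h1, h2⟩ ⟨h3, h4⟩
  refine ⟨P.trans h3 h1, fun hca => ?_⟩
  subst hca
  exact h2 (P.antisymm h1 h3)

lemma depSet_mem_le {le : Fin N → Fin N → Prop} (P : POr le) {t a : Fin N} {k : ℕ}
    (hk : k ∈ depSet le t a) : k + 1 ≤ N := by
  obtain ⟨l, hc, _, _, hlen⟩ := hk
  haveI := sdr_trans P
  have hpw := (List.isChain_iff_pairwise).1 hc
  have hnd : l.Nodup := hpw.imp (fun h => Ne.symm h.2)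
  have := hnd.length_le_card
  simpa [hlen] using this

lemma depSet_bdd {le : Fin N → Fin N → Prop} (P : POr le) (t a : Fin N) :
    BddAbove (depSet le t a) :=
  ⟨N, fun k hk => by have := depSet_mem_le P hk; omega⟩

lemma le_dep {le : Fin N → Fin N → Prop} (P : POr le) {t a : Fin N} {k : ℕ}
    (hk : k ∈ depSet le t a) : k ≤ dep le t a :=
  le_csSup (depSet_bdd P t a) hk

lemma dep_mem {le : Fin N → Fin N → Prop} (P : POr le) {t a : Fin N}
    (hne : (depSet le t a).Nonempty) : dep le t a ∈ depSet le t a :=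
  Nat.sSup_mem hne (depSet_bdd P t a)

lemma mem_depSet_self (le : Fin N → Fin N → Prop) (t : Fin N) : 0 ∈ depSet le t t :=
  ⟨[t], by simp [List.Chain', List.isChain_singleton]⟩

lemma mem_depSet_one {le : Fin N → Fin N → Prop} {t a : Fin N} (h : le a t) (hne : a ≠ t) :
    1 ∈ depSet le t a :=
  ⟨[t, a], by simp [List.Chain', List.isChain_cons_cons, h, hne]⟩

lemma depSet_nonempty {le : Fin N → Fin N → Prop} {z o : Fin N} (hB : Bounds le z o)
    (a : Fin N) : (depSet le o a).Nonempty := by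
  by_cases h : a = o
  · exact ⟨0, h ▸ mem_depSet_self le o⟩
  · exact ⟨1, mem_depSet_one (hB.2 a) h⟩

lemma mem_depSet_extend {le : Fin N → Fin N → Prop} {t c x : Fin N} {k : ℕ}
    (hk : k ∈ depSet le t c) (hxc : le x c) (hne : x ≠ c) : k + 1 ∈ depSet le t x := by
  obtain ⟨l, hc, hh, hl, hlen⟩ := hk
  refine ⟨l ++ [x], ?_, ?_, ?_, by simp [hlen]⟩
  · rw [List.Chain', List.isChain_append]
    refine ⟨hc, List.isChain_singleton x, ?_⟩
    intro p hp q hq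
    simp at hq
    subst hq
    rw [hl] at hp
    simp at hp
    subst hp
    exact ⟨hxc, hne⟩
  · have : l ≠ [] := by rintro rfl; simp at hh
    rw [List.head?_append, hh]; rfl
  · exact List.getLast?_concat

lemma dep_lt_of_lt {le : Fin N → Fin N → Prop} {z o : Fin N} (P : POr le)
    (hB : Bounds le z o) {x c : Fin N} (hxc : le x c) (hne : x ≠ c) :
    dep le o c < dep le o x := by
  have h1 := dep_mem P (depSet_nonempty hB c)
  have h2 := mem_depSet_extend h1 hxc hne
  have := le_dep P h2
  omega

lemma mem_of_getLast?_eq {α : Type*} {l : List α} {a : α} (h : l.getLast? = some a) :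
    a ∈ l := by
  obtain ⟨hne, heq⟩ := List.mem_getLast?_eq_getLast (x := a) h
  rw [heq]
  exact List.getLast_mem hne

lemma depSet_self_eq_zero {le : Fin N → Fin N → Prop} (P : POr le) (t : Fin N) {k : ℕ}
    (hk : k ∈ depSet le t t) : k = 0 := by
  obtain ⟨l, hc, hh, hl, hlen⟩ := hk
  haveI := sdr_trans P
  have hpw := (List.isChain_iff_pairwise).1 hc
  cases l with
  | nil => simp at hh
  | cons a rest =>
    have ha : a = t := by simpa using hh
    cases rest with
    | nil => simp at hlen; omega
    | cons b rest' =>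
      exfalso
      have hmem : t ∈ b :: rest' := by
        refine mem_of_getLast?_eq (l := b :: rest') ?_
        rw [List.getLast?_cons_cons] at hl
        exact hl
      have h2 := (List.pairwise_cons.1 hpw).1 t hmem
      rw [ha] at h2
      exact h2.2 rfl

lemma dep_self (le : Fin N → Fin N → Prop) (P : POr le) (t : Fin N) : dep le t t = 0 := by
  have h0 : (0 : ℕ) ∈ depSet le t t := mem_depSet_self le t
  have h1 : dep le t t ≤ 0 :=
    csSup_le ⟨0, h0⟩ (fun k hk => le_of_eq (depSet_self_eq_zero P t hk))
  omega

lemma dep_eq_zero_iff {le : Fin N → Fin N → Prop} {z o : Fin N} (P : POr le)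
    (hB : Bounds le z o) {a : Fin N} : dep le o a = 0 ↔ a = o := by
  constructor
  · intro h
    by_contra hne
    have := le_dep P (mem_depSet_one (hB.2 a) hne)
    omega
  · rintro rfl; exact dep_self le P _

lemma dep_lt_N {le : Fin N → Fin N → Prop} {z o : Fin N} (P : POr le) (hB : Bounds le z o)
    (a : Fin N) : dep le o a < N := by
  have := depSet_mem_le P (dep_mem P (depSet_nonempty hB a))
  omega

lemma depSet_perm {le₁ le₂ : Fin N → Fin N → Prop} (π : Equiv.Perm (Fin N))
    (hiso : ∀ x y, le₂ x y ↔ permLe π le₁ x y) (t a : Fin N) :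
    depSet le₂ t a = depSet le₁ (π.symm t) (π.symm a) := by
  ext k
  constructor
  · rintro ⟨l, hc, hh, hl, hlen⟩
    refine ⟨l.map π.symm, ?_, ?_, ?_, by simp [hlen]⟩
    · rw [List.Chain', List.isChain_map]
      refine List.IsChain.imp ?_ hc
      intro x y h
      exact ⟨(hiso y x).1 h.1, fun he => h.2 (π.symm.injective he)⟩
    · rw [List.head?_map, hh]; rfl
    · rw [List.getLast?_map, hl]; rfl
  · rintro ⟨l, hc, hh, hl, hlen⟩
    refine ⟨l.map π, ?_, ?_, ?_, by simp [hlen]⟩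
    · rw [List.Chain', List.isChain_map]
      refine List.IsChain.imp ?_ hc
      intro x y h
      constructor
      · rw [hiso]; unfold permLe; simpa using h.1
      · exact fun he => h.2 (π.injective he)
    · rw [List.head?_map, hh]; simp
    · rw [List.getLast?_map, hl]; simp

lemma dep_perm {le₁ le₂ : Fin N → Fin N → Prop} (π : Equiv.Perm (Fin N))
    (hiso : ∀ x y, le₂ x y ↔ permLe π le₁ x y) (t a : Fin N) :
    dep le₂ t a = dep le₁ (π.symm t) (π.symm a) := by
  rw [dep_eq_sSup, dep_eq_sSup, depSet_perm π hiso]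

lemma perm_fix_top {le₁ le₂ : Fin N → Fin N → Prop} {z o : Fin N} (P₂ : POr le₂)
    (π : Equiv.Perm (Fin N)) (hiso : ∀ x y, le₂ x y ↔ permLe π le₁ x y)
    (hB₁ : Bounds le₁ z o) (hB₂ : Bounds le₂ z o) : π o = o := by
  have h1 : le₂ (π o) o := hB₂.2 _
  have h2 : le₂ o (π o) := by
    rw [hiso]; unfold permLe; simpa using hB₁.2 _
  exact P₂.antisymm h1 h2

lemma perm_fix_bot {le₁ le₂ : Fin N → Fin N → Prop} {z o : Fin N} (P₂ : POr le₂)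
    (π : Equiv.Perm (Fin N)) (hiso : ∀ x y, le₂ x y ↔ permLe π le₁ x y)
    (hB₁ : Bounds le₁ z o) (hB₂ : Bounds le₂ z o) : π z = z := by
  have h1 : le₂ z (π z) := hB₂.1 _
  have h2 : le₂ (π z) z := by
    rw [hiso]; unfold permLe; simpa using hB₁.1 _
  exact P₂.antisymm h2 h1

lemma perm_pigeonhole {σ : Equiv.Perm (Fin N)} {z : Fin N} (hz : (z : ℕ) = 0)
    (hσz : σ z = z) {j : Fin N} (hj : 0 < (j : ℕ)) :
    ∃ k : Fin N, 0 < (k : ℕ) ∧ (k : ℕ) ≤ (j : ℕ) ∧ (j : ℕ) ≤ (σ k : ℕ) := by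
  by_contra hcon
  push_neg at hcon
  classical
  set S : Finset (Fin N) := Finset.univ.filter (fun k => 0 < (k : ℕ) ∧ (k : ℕ) ≤ (j : ℕ)) with hS
  set T : Finset (Fin N) := Finset.univ.filter (fun m => 0 < (m : ℕ) ∧ (m : ℕ) < (j : ℕ)) with hT
  have hmap : ∀ k ∈ S, σ k ∈ T := by
    intro k hk
    simp only [hS, Finset.mem_filter, Finset.mem_univ, true_and] at hk
    have hlt := hcon k hk.1 hk.2
    have hne : (σ k : ℕ) ≠ 0 := by
      intro h0
      have h1 : σ k = z := Fin.ext (by omega)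
      have h2 : k = z := σ.injective (by rw [h1, hσz])
      omega
    simp only [hT, Finset.mem_filter, Finset.mem_univ, true_and]
    omega
  have hsub : T ⊆ S := by
    intro m hm
    simp only [hT, Finset.mem_filter, Finset.mem_univ, true_and] at hm
    simp only [hS, Finset.mem_filter, Finset.mem_univ, true_and]
    omega
  have hjS : j ∈ S := by simp [hS]; omega
  have hjT : j ∉ T := by simp [hT]
  have hcard1 : S.card ≤ T.card :=
    Finset.card_le_card_of_injOn σ hmap (fun a _ b _ h => σ.injective h)
  have hcard2 : T.card < S.card :=
    Finset.card_lt_card ⟨hsub, fun h => hjT (h hjS)⟩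
  omega

lemma mono_eq_of_perm {f g : Fin N → ℕ} {σ : Equiv.Perm (Fin N)} {z : Fin N}
    (hz : (z : ℕ) = 0) (hσz : σ z = z)
    (hf : ∀ i j : Fin N, 0 < (i : ℕ) → (i : ℕ) ≤ (j : ℕ) → f i ≤ f j)
    (hg : ∀ i j : Fin N, 0 < (i : ℕ) → (i : ℕ) ≤ (j : ℕ) → g i ≤ g j)
    (hgf : ∀ k, g k = f (σ k)) : ∀ j : Fin N, 0 < (j : ℕ) → g j = f j := by
  have key : ∀ (f g : Fin N → ℕ) (σ : Equiv.Perm (Fin N)), σ z = z →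
      (∀ i j : Fin N, 0 < (i : ℕ) → (i : ℕ) ≤ (j : ℕ) → f i ≤ f j) →
      (∀ i j : Fin N, 0 < (i : ℕ) → (i : ℕ) ≤ (j : ℕ) → g i ≤ g j) →
      (∀ k, g k = f (σ k)) → ∀ j : Fin N, 0 < (j : ℕ) → f j ≤ g j := by
    intro f g σ hσz hf hg hgf j hj
    obtain ⟨k, hk0, hkj, hjσ⟩ := perm_pigeonhole hz hσz hj
    calc f j ≤ f (σ k) := hf j (σ k) hj hjσ
    _ = g k := (hgf k).symm
    _ ≤ g j := hg k j hk0 hkj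
  intro j hj
  have h1 := key f g σ hσz hf hg hgf j hj
  have h2 := key g f σ.symm ((Equiv.symm_apply_eq σ).mpr hσz.symm) hg hf
    (fun k => by rw [hgf (σ.symm k)]; simp) j hj
  omega

/-- For isomorphic levellised lattices with common bounds, depths of nonzero labels agree. -/
lemma dep_eq_of_iso {le₁ le₂ : Fin N → Fin N → Prop} {z o : Fin N}
    (P₁ : POr le₁) (P₂ : POr le₂) (hz : (z : ℕ) = 0)
    (hB₁ : Bounds le₁ z o) (hB₂ : Bounds le₂ z o)
    (hL₁ : Levellised le₁ o) (hL₂ : Levellised le₂ o)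
    (π : Equiv.Perm (Fin N)) (hiso : ∀ x y, le₂ x y ↔ permLe π le₁ x y) :
    ∀ j : Fin N, 0 < (j : ℕ) → dep le₂ o j = dep le₁ o j := by
  have hπo : π o = o := perm_fix_top P₂ π hiso hB₁ hB₂
  have hπz : π z = z := perm_fix_bot P₂ π hiso hB₁ hB₂
  have hσz : π.symm z = z := (Equiv.symm_apply_eq π).mpr hπz.symm
  have hσo : π.symm o = o := (Equiv.symm_apply_eq π).mpr hπo.symm
  have hgf : ∀ k, dep le₂ o k = dep le₁ o (π.symm k) := by
    intro k
    rw [dep_perm π hiso o k, hσo]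
  exact mono_eq_of_perm hz hσz hL₁ hL₂ hgf

lemma cov_ne_bot {le : Fin N → Fin N → Prop} {z o : Fin N} (P : POr le)
    (hB : Bounds le z o) {x b : Fin N} (h : CovByRel le x b) : b ≠ z := by
  rintro rfl
  exact h.1.2 (P.antisymm (hB.1 x) h.1.1).symm

lemma cov_top_empty {le : Fin N → Fin N → Prop} {z o : Fin N} (P : POr le)
    (hB : Bounds le z o) {b : Fin N} (h : CovByRel le o b) : False :=
  h.1.2 (P.antisymm h.1.1 (hB.2 b))

lemma cov_top_unique {le : Fin N → Fin N → Prop} {z o : Fin N}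
    (hB : Bounds le z o) {x b : Fin N} (ho : CovByRel le x o) (hb : CovByRel le x b) :
    b = o := by
  by_contra hne
  exact ho.2 b hb.1 ⟨hB.2 b, hne⟩

lemma exists_cov {le : Fin N → Fin N → Prop} {z o : Fin N} (P : POr le)
    (hB : Bounds le z o) {x y : Fin N} (hxy : le x y) (hne : x ≠ y) :
    ∃ c, CovByRel le x c ∧ le c y := by
  classical
  set F : Finset (Fin N) := Finset.univ.filter (fun w => le x w ∧ w ≠ x ∧ le w y) with hF
  have hyF : y ∈ F := by
    simp only [hF, Finset.mem_filter, Finset.mem_univ, true_and]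
    exact ⟨hxy, Ne.symm hne, P.refl y⟩
  obtain ⟨c, hcF, hmax⟩ := Finset.exists_max_image F (fun w => dep le o w) ⟨y, hyF⟩
  simp only [hF, Finset.mem_filter, Finset.mem_univ, true_and] at hcF
  refine ⟨c, ⟨⟨hcF.1, Ne.symm hcF.2.1⟩, ?_⟩, hcF.2.2⟩
  rintro w ⟨hxw, hxwne⟩ ⟨hwc, hwcne⟩
  have hwF : w ∈ F := by
    simp only [hF, Finset.mem_filter, Finset.mem_univ, true_and]
    exact ⟨hxw, Ne.symm hxwne, P.trans hwc hcF.2.2⟩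
  have h1 := hmax w hwF
  have h2 := dep_lt_of_lt P hB hwc hwcne
  omega

lemma wt_eq_sum (A : Set (Fin N)) [DecidablePred (· ∈ A)] :
    wt A = ∑ i ∈ (Finset.univ.filter (· ∈ A)).image Fin.val, 2 ^ i := by
  rw [Finset.sum_image (by intro a _ b _ h; exact Fin.val_injective h)]
  rw [Finset.sum_filter]
  unfold wt
  congr 1
  ext j
  by_cases h : j ∈ A <;> simp [Set.indicator_apply, h]

lemma wt_injective {A B : Set (Fin N)} (h : wt A = wt B) : A = B := by
  classical
  rw [wt_eq_sum A, wt_eq_sum B] at h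
  have h2 := Finset.geomSum_injective (n := 2) le_rfl h
  ext a
  constructor <;> intro ha
  · have h3 : (a : ℕ) ∈ (Finset.univ.filter (· ∈ B)).image Fin.val := by
      rw [← h2]
      exact Finset.mem_image_of_mem _ (by simp [ha])
    obtain ⟨b, hb, hba⟩ := Finset.mem_image.1 h3
    simp only [Finset.mem_filter, Finset.mem_univ, true_and] at hb
    rwa [← Fin.val_injective hba]
  · have h3 : (a : ℕ) ∈ (Finset.univ.filter (· ∈ A)).image Fin.val := by
      rw [h2]
      exact Finset.mem_image_of_mem _ (by simp [ha])
    obtain ⟨b, hb, hba⟩ := Finset.mem_image.1 h3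
    simp only [Finset.mem_filter, Finset.mem_univ, true_and] at hb
    rwa [← Fin.val_injective hba]

/-- If depths and levelwise covering weights agree, the covering sets of nonzero
elements agree. -/
lemma cov_eq_of_data {le₁ le₂ : Fin N → Fin N → Prop} {z o : Fin N}
    (P₁ : POr le₁) (P₂ : POr le₂) (hz : (z : ℕ) = 0)
    (hB₁ : Bounds le₁ z o) (hB₂ : Bounds le₂ z o)
    (hdep : ∀ j : Fin N, 0 < (j : ℕ) → dep le₂ o j = dep le₁ o j)
    (hslice : ∀ (j : Fin N) (e : ℕ), 0 < (j : ℕ) → 1 ≤ e → e < dep le₁ o j →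
      covwt le₁ o e j = covwt le₂ o e j) :
    ∀ x : Fin N, 0 < (x : ℕ) → cov le₁ x = cov le₂ x := by
  intro x hx
  have hslice' : ∀ (j : Fin N) (e : ℕ), 0 < (j : ℕ) → 1 ≤ e → e < dep le₁ o j →
      cov le₁ j ∩ lev le₁ o e = cov le₂ j ∩ lev le₂ o e := by
    intro j e h1 h2 h3
    exact wt_injective (hslice j e h1 h2 h3)
  by_cases hxo : x = o
  · ext b
    constructor <;> intro hb
    · rw [hxo] at hb
      exact absurd hb (fun h => cov_top_empty P₁ hB₁ h)
    · rw [hxo] at hb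
      exact absurd hb (fun h => cov_top_empty P₂ hB₂ h)
  · have hnz : ∀ {le : Fin N → Fin N → Prop}, POr le → Bounds le z o →
        ∀ {b : Fin N}, CovByRel le x b → 0 < (b : ℕ) := by
      intro le P hB b h
      have hbz := cov_ne_bot P hB h
      have : (b : ℕ) ≠ 0 := fun h0 => hbz (Fin.ext (by omega))
      omega
    ext b
    by_cases hbo : b = o
    · rw [hbo]
      constructor
      · intro h1
        obtain ⟨c, hc, hco⟩ := exists_cov P₂ hB₂ (hB₂.2 x) hxo
        have hc_eq : c = o := by
          by_contra hcne
          have hc0 : 0 < (c : ℕ) := hnz P₂ hB₂ hc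
          set d := dep le₂ o c with hd
          have hd1 : 1 ≤ d := by
            rcases Nat.eq_zero_or_pos d with h | h
            · exact absurd ((dep_eq_zero_iff P₂ hB₂).1 (by rw [← hd]; exact h)) hcne
            · exact h
          have hdlt : d < dep le₁ o x := by
            have h5 := dep_lt_of_lt P₂ hB₂ hc.1.1 hc.1.2
            rw [hdep x hx] at h5
            rw [hd]
            exact h5
          have hmem : c ∈ cov le₂ x ∩ lev le₂ o d := ⟨hc, hd.symm⟩
          rw [← hslice' x d hx hd1 hdlt] at hmem
          exact hcne (cov_top_unique hB₁ h1 hmem.1)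
        rw [hc_eq] at hc
        exact hc
      · intro h1
        obtain ⟨c, hc, hco⟩ := exists_cov P₁ hB₁ (hB₁.2 x) hxo
        have hc_eq : c = o := by
          by_contra hcne
          have hc0 : 0 < (c : ℕ) := hnz P₁ hB₁ hc
          set d := dep le₁ o c with hd
          have hd1 : 1 ≤ d := by
            rcases Nat.eq_zero_or_pos d with h | h
            · exact absurd ((dep_eq_zero_iff P₁ hB₁).1 (by rw [← hd]; exact h)) hcne
            · exact h
          have hdlt : d < dep le₁ o x := by
            rw [hd]
            exact dep_lt_of_lt P₁ hB₁ hc.1.1 hc.1.2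
          have hmem : c ∈ cov le₁ x ∩ lev le₁ o d := ⟨hc, hd.symm⟩
          rw [hslice' x d hx hd1 hdlt] at hmem
          have hmem2 : c ∈ lev le₂ o d := hmem.2
          have : dep le₂ o c = d := hmem2
          exact hcne (cov_top_unique hB₂ h1 hmem.1)
        rw [hc_eq] at hc
        exact hc
    · constructor
      · intro h1
        have hb0 : 0 < (b : ℕ) := hnz P₁ hB₁ h1
        set d := dep le₁ o b with hd
        have hd1 : 1 ≤ d := by
          rcases Nat.eq_zero_or_pos d with h | h
          · exact absurd ((dep_eq_zero_iff P₁ hB₁).1 (by rw [← hd]; exact h)) hbo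
          · exact h
        have hdlt : d < dep le₁ o x := by
          rw [hd]
          exact dep_lt_of_lt P₁ hB₁ h1.1.1 h1.1.2
        have hmem : b ∈ cov le₁ x ∩ lev le₁ o d := ⟨h1, hd.symm⟩
        rw [hslice' x d hx hd1 hdlt] at hmem
        exact hmem.1
      · intro h1
        have hb0 : 0 < (b : ℕ) := hnz P₂ hB₂ h1
        set d := dep le₂ o b with hd
        have hd1 : 1 ≤ d := by
          rcases Nat.eq_zero_or_pos d with h | h
          · exact absurd ((dep_eq_zero_iff P₂ hB₂).1 (by rw [← hd]; exact h)) hbo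
          · exact h
        have hdlt : d < dep le₁ o x := by
          have h5 := dep_lt_of_lt P₂ hB₂ h1.1.1 h1.1.2
          rw [hdep x hx] at h5
          rw [hd]
          exact h5
        have hmem : b ∈ cov le₂ x ∩ lev le₂ o d := ⟨h1, hd.symm⟩
        rw [← hslice' x d hx hd1 hdlt] at hmem
        exact hmem.1

/-- If covering sets of nonzero elements agree, the order is determined. -/
lemma le_imp_of_cov_eq {le₁ le₂ : Fin N → Fin N → Prop} {z o : Fin N}
    (P₁ : POr le₁) (P₂ : POr le₂) (hz : (z : ℕ) = 0)
    (hB₁ : Bounds le₁ z o) (hB₂ : Bounds le₂ z o)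
    (hcov : ∀ x : Fin N, 0 < (x : ℕ) → cov le₁ x = cov le₂ x) :
    ∀ x y, le₁ x y → le₂ x y := by
  have main : ∀ k (x y : Fin N), dep le₁ o x = k → le₁ x y → le₂ x y := by
    intro k
    induction k using Nat.strong_induction_on with
    | _ k IH =>
      intro x y hk hxy
      by_cases hx0 : (x : ℕ) = 0
      · have : x = z := Fin.ext (by omega)
        subst this
        exact hB₂.1 y
      · by_cases hxy' : x = y
        · subst hxy'; exact P₂.refl x
        · obtain ⟨c, hc, hcy⟩ := exists_cov P₁ hB₁ hxy hxy'
          have hdc : dep le₁ o c < k := hk ▸ dep_lt_of_lt P₁ hB₁ hc.1.1 hc.1.2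
          have hc2 : CovByRel le₂ x c := by
            have h6 : c ∈ cov le₁ x := hc
            rw [hcov x (by omega)] at h6
            exact h6
          have hcy2 : le₂ c y := IH (dep le₁ o c) hdc c y rfl hcy
          exact P₂.trans hc2.1.1 hcy2
  intro x y
  exact main (dep le₁ o x) x y rfl

/-- Linearisation key for the level-major position order. -/
def kappa (N D e j : ℕ) : ℕ := D * (N * N + N) + (N - e) * N + j

lemma kappa_lt {N Dp Dq ep eq' jp jq : ℕ} (hjp : jp < N) (hjq : jq < N)
    (hep : ep ≤ N) (heq : eq' ≤ N)
    (h : Dp < Dq ∨ (Dp = Dq ∧ eq' < ep) ∨ (Dp = Dq ∧ ep = eq' ∧ jp < jq)) :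
    kappa N Dp ep jp < kappa N Dq eq' jq := by
  unfold kappa
  have hup : (N - ep) * N ≤ N * N := Nat.mul_le_mul_right N (by omega)
  rcases h with h | ⟨h1, h2⟩ | ⟨h1, h2, h3⟩
  · have hstep : Dp * (N * N + N) + (N * N + N) ≤ Dq * (N * N + N) := by
      have : (Dp + 1) * (N * N + N) ≤ Dq * (N * N + N) :=
        Nat.mul_le_mul_right _ (by omega)
      calc Dp * (N * N + N) + (N * N + N) = (Dp + 1) * (N * N + N) := by ring
      _ ≤ Dq * (N * N + N) := this
    calc Dp * (N * N + N) + (N - ep) * N + jp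
        < Dp * (N * N + N) + (N * N + N) := by omega
      _ ≤ Dq * (N * N + N) := hstep
      _ ≤ Dq * (N * N + N) + (N - eq') * N + jq := by omega
  · subst h1
    have hstep : (N - ep) * N + N ≤ (N - eq') * N := by
      have h4 : (N - ep) + 1 ≤ N - eq' := by omega
      have : ((N - ep) + 1) * N ≤ (N - eq') * N := Nat.mul_le_mul_right _ h4
      calc (N - ep) * N + N = ((N - ep) + 1) * N := by ring
      _ ≤ (N - eq') * N := this
    omega
  · subst h1
    rw [h2]
    omega


/-- the level-major order `<` is transitive and trichotomous on each set of
pairwise-isomorphic levellised `n`-lattices. -/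
theorem statement17 {n : ℕ} (hn : 2 ≤ n) :
    (∀ L₁ L₂ L₃ : Lattice (Fin n),
      Bounds L₁.le ⟨0, by omega⟩ ⟨1, by omega⟩ → Levellised L₁.le ⟨1, by omega⟩ →
      Bounds L₂.le ⟨0, by omega⟩ ⟨1, by omega⟩ → Levellised L₂.le ⟨1, by omega⟩ →
      Bounds L₃.le ⟨0, by omega⟩ ⟨1, by omega⟩ → Levellised L₃.le ⟨1, by omega⟩ →
      (∃ π : Equiv.Perm (Fin n), ∀ x y, L₂.le x y ↔ permLe π L₁.le x y) →
      (∃ π : Equiv.Perm (Fin n), ∀ x y, L₃.le x y ↔ permLe π L₁.le x y) →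
      ltLM L₁ L₂ ⟨1, by omega⟩ → ltLM L₂ L₃ ⟨1, by omega⟩ → ltLM L₁ L₃ ⟨1, by omega⟩) ∧
    (∀ L₁ L₂ : Lattice (Fin n),
      Bounds L₁.le ⟨0, by omega⟩ ⟨1, by omega⟩ → Levellised L₁.le ⟨1, by omega⟩ →
      Bounds L₂.le ⟨0, by omega⟩ ⟨1, by omega⟩ → Levellised L₂.le ⟨1, by omega⟩ →
      (∃ π : Equiv.Perm (Fin n), ∀ x y, L₂.le x y ↔ permLe π L₁.le x y) →
      (ltLM L₁ L₂ ⟨1, by omega⟩ ∨ (∀ x y, L₁.le x y ↔ L₂.le x y) ∨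
        ltLM L₂ L₁ ⟨1, by omega⟩)) := by
  have ht0 : (1 : ℕ) < n := by omega
  have hz0 : (0 : ℕ) < n := by omega
  constructor
  · -- transitivity
    intro L₁ L₂ L₃ hB₁ hL₁ hB₂ hL₂ hB₃ hL₃ hiso₂ hiso₃ h12 h23
    obtain ⟨π₂, hπ₂⟩ := hiso₂
    have P₁ := lattice_por L₁
    have P₂ := lattice_por L₂
    have hdep2 : ∀ j : Fin n, 0 < (j : ℕ) →
        dep L₂.le ⟨1, ht0⟩ j = dep L₁.le ⟨1, ht0⟩ j :=
      dep_eq_of_iso (z := ⟨0, hz0⟩) P₁ P₂ rfl hB₁ hB₂ hL₁ hL₂ π₂ hπ₂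
    obtain ⟨i, d, hi, hd1, hdltX, hltX, heqX⟩ := h12
    obtain ⟨i', d', hi', hd1', hdltX', hltX', heqX'⟩ := h23
    -- normalise to a common top label
    have hdlt : d < dep L₁.le ⟨1, ht0⟩ i := hdltX
    have hlt : covwt L₁.le ⟨1, ht0⟩ d i < covwt L₂.le ⟨1, ht0⟩ d i := hltX
    have heq : ∀ (j : Fin n) (e : ℕ), 0 < (j : ℕ) → 1 ≤ e → e < dep L₁.le ⟨1, ht0⟩ j →
        (dep L₁.le ⟨1, ht0⟩ j < dep L₁.le ⟨1, ht0⟩ i ∨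
          (dep L₁.le ⟨1, ht0⟩ j = dep L₁.le ⟨1, ht0⟩ i ∧ d < e) ∨
          (dep L₁.le ⟨1, ht0⟩ j = dep L₁.le ⟨1, ht0⟩ i ∧ e = d ∧ (j : ℕ) < (i : ℕ))) →
        covwt L₁.le ⟨1, ht0⟩ e j = covwt L₂.le ⟨1, ht0⟩ e j := heqX
    have hdlt'₂ : d' < dep L₂.le ⟨1, ht0⟩ i' := hdltX'
    have hlt' : covwt L₂.le ⟨1, ht0⟩ d' i' < covwt L₃.le ⟨1, ht0⟩ d' i' := hltX'
    have heq' : ∀ (j : Fin n) (e : ℕ), 0 < (j : ℕ) → 1 ≤ e → e < dep L₂.le ⟨1, ht0⟩ j →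
        (dep L₂.le ⟨1, ht0⟩ j < dep L₂.le ⟨1, ht0⟩ i' ∨
          (dep L₂.le ⟨1, ht0⟩ j = dep L₂.le ⟨1, ht0⟩ i' ∧ d' < e) ∨
          (dep L₂.le ⟨1, ht0⟩ j = dep L₂.le ⟨1, ht0⟩ i' ∧ e = d' ∧ (j : ℕ) < (i' : ℕ))) →
        covwt L₂.le ⟨1, ht0⟩ e j = covwt L₃.le ⟨1, ht0⟩ e j := heqX'
    -- rephrase heq' with depths of L₁
    have heq'' : ∀ (j : Fin n) (e : ℕ), 0 < (j : ℕ) → 1 ≤ e → e < dep L₁.le ⟨1, ht0⟩ j →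
        (dep L₁.le ⟨1, ht0⟩ j < dep L₁.le ⟨1, ht0⟩ i' ∨
          (dep L₁.le ⟨1, ht0⟩ j = dep L₁.le ⟨1, ht0⟩ i' ∧ d' < e) ∨
          (dep L₁.le ⟨1, ht0⟩ j = dep L₁.le ⟨1, ht0⟩ i' ∧ e = d' ∧ (j : ℕ) < (i' : ℕ))) →
        covwt L₂.le ⟨1, ht0⟩ e j = covwt L₃.le ⟨1, ht0⟩ e j := by
      intro j e hj he hedep hcond
      refine heq' j e hj he ?_ ?_
      · rw [hdep2 j hj]; exact hedep
      · rw [hdep2 j hj, hdep2 i' hi']; exact hcond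
    have hdlt' : d' < dep L₁.le ⟨1, ht0⟩ i' := by
      rw [← hdep2 i' hi']; exact hdlt'₂
    show ltLM L₁ L₃ ⟨1, ht0⟩
    have hcases : (dep L₁.le ⟨1, ht0⟩ i < dep L₁.le ⟨1, ht0⟩ i' ∨
          (dep L₁.le ⟨1, ht0⟩ i = dep L₁.le ⟨1, ht0⟩ i' ∧ d' < d) ∨
          (dep L₁.le ⟨1, ht0⟩ i = dep L₁.le ⟨1, ht0⟩ i' ∧ d = d' ∧ (i : ℕ) < (i' : ℕ))) ∨
        (dep L₁.le ⟨1, ht0⟩ i' < dep L₁.le ⟨1, ht0⟩ i ∨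
          (dep L₁.le ⟨1, ht0⟩ i' = dep L₁.le ⟨1, ht0⟩ i ∧ d < d') ∨
          (dep L₁.le ⟨1, ht0⟩ i' = dep L₁.le ⟨1, ht0⟩ i ∧ d' = d ∧ (i' : ℕ) < (i : ℕ))) ∨
        ((i : ℕ) = (i' : ℕ) ∧ d = d') := by
      by_cases hii : (i : ℕ) = (i' : ℕ)
      · have hieq : i = i' := Fin.ext hii
        subst hieq
        omega
      · omega
    rcases hcases with hc | hc | hc
    · -- (i, d) comes first
      have hmid : covwt L₂.le ⟨1, ht0⟩ d i = covwt L₃.le ⟨1, ht0⟩ d i :=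
        heq'' i d hi hd1 hdlt hc
      refine ⟨i, d, hi, hd1, hdlt, lt_of_lt_of_le hlt (le_of_eq hmid), ?_⟩
      intro j e hj he hedepX hcondX
      have hedep : e < dep L₁.le ⟨1, ht0⟩ j := hedepX
      have hcond : (dep L₁.le ⟨1, ht0⟩ j < dep L₁.le ⟨1, ht0⟩ i ∨
          (dep L₁.le ⟨1, ht0⟩ j = dep L₁.le ⟨1, ht0⟩ i ∧ d < e) ∨
          (dep L₁.le ⟨1, ht0⟩ j = dep L₁.le ⟨1, ht0⟩ i ∧ e = d ∧ (j : ℕ) < (i : ℕ))) := hcondX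
      have e1 : covwt L₁.le ⟨1, ht0⟩ e j = covwt L₂.le ⟨1, ht0⟩ e j := heq j e hj he hedep hcond
      have hcond' : (dep L₁.le ⟨1, ht0⟩ j < dep L₁.le ⟨1, ht0⟩ i' ∨
          (dep L₁.le ⟨1, ht0⟩ j = dep L₁.le ⟨1, ht0⟩ i' ∧ d' < e) ∨
          (dep L₁.le ⟨1, ht0⟩ j = dep L₁.le ⟨1, ht0⟩ i' ∧ e = d' ∧ (j : ℕ) < (i' : ℕ))) := by
        omega
      have e2 : covwt L₂.le ⟨1, ht0⟩ e j = covwt L₃.le ⟨1, ht0⟩ e j := heq'' j e hj he hedep hcond'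
      exact e1.trans e2
    · -- (i', d') comes first
      have hmid : covwt L₁.le ⟨1, ht0⟩ d' i' = covwt L₂.le ⟨1, ht0⟩ d' i' :=
        heq i' d' hi' hd1' hdlt' hc
      refine ⟨i', d', hi', hd1', hdlt', lt_of_le_of_lt (le_of_eq hmid) hlt', ?_⟩
      intro j e hj he hedepX hcondX
      have hedep : e < dep L₁.le ⟨1, ht0⟩ j := hedepX
      have hcond : (dep L₁.le ⟨1, ht0⟩ j < dep L₁.le ⟨1, ht0⟩ i' ∨
          (dep L₁.le ⟨1, ht0⟩ j = dep L₁.le ⟨1, ht0⟩ i' ∧ d' < e) ∨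
          (dep L₁.le ⟨1, ht0⟩ j = dep L₁.le ⟨1, ht0⟩ i' ∧ e = d' ∧ (j : ℕ) < (i' : ℕ))) := hcondX
      have hcondp : (dep L₁.le ⟨1, ht0⟩ j < dep L₁.le ⟨1, ht0⟩ i ∨
          (dep L₁.le ⟨1, ht0⟩ j = dep L₁.le ⟨1, ht0⟩ i ∧ d < e) ∨
          (dep L₁.le ⟨1, ht0⟩ j = dep L₁.le ⟨1, ht0⟩ i ∧ e = d ∧ (j : ℕ) < (i : ℕ))) := by
        omega
      have e1 : covwt L₁.le ⟨1, ht0⟩ e j = covwt L₂.le ⟨1, ht0⟩ e j := heq j e hj he hedep hcondp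
      have e2 : covwt L₂.le ⟨1, ht0⟩ e j = covwt L₃.le ⟨1, ht0⟩ e j := heq'' j e hj he hedep hcond
      exact e1.trans e2
    · -- same position
      obtain ⟨hii, hdd⟩ := hc
      have hieq : i = i' := Fin.ext hii
      have hdepii : dep L₁.le ⟨1, ht0⟩ i = dep L₁.le ⟨1, ht0⟩ i' := by rw [hieq]
      have hlt'' : covwt L₂.le ⟨1, ht0⟩ d i < covwt L₃.le ⟨1, ht0⟩ d i := by
        rw [hieq, hdd]; exact hlt'
      refine ⟨i, d, hi, hd1, hdlt, lt_trans hlt hlt'', ?_⟩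
      intro j e hj he hedepX hcondX
      have hedep : e < dep L₁.le ⟨1, ht0⟩ j := hedepX
      have hcond : (dep L₁.le ⟨1, ht0⟩ j < dep L₁.le ⟨1, ht0⟩ i ∨
          (dep L₁.le ⟨1, ht0⟩ j = dep L₁.le ⟨1, ht0⟩ i ∧ d < e) ∨
          (dep L₁.le ⟨1, ht0⟩ j = dep L₁.le ⟨1, ht0⟩ i ∧ e = d ∧ (j : ℕ) < (i : ℕ))) := hcondX
      have e1 : covwt L₁.le ⟨1, ht0⟩ e j = covwt L₂.le ⟨1, ht0⟩ e j := heq j e hj he hedep hcond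
      have hcond' : (dep L₁.le ⟨1, ht0⟩ j < dep L₁.le ⟨1, ht0⟩ i' ∨
          (dep L₁.le ⟨1, ht0⟩ j = dep L₁.le ⟨1, ht0⟩ i' ∧ d' < e) ∨
          (dep L₁.le ⟨1, ht0⟩ j = dep L₁.le ⟨1, ht0⟩ i' ∧ e = d' ∧ (j : ℕ) < (i' : ℕ))) := by
        omega
      have e2 : covwt L₂.le ⟨1, ht0⟩ e j = covwt L₃.le ⟨1, ht0⟩ e j := heq'' j e hj he hedep hcond'
      exact e1.trans e2
  · -- trichotomy
    intro L₁ L₂ hB₁ hL₁ hB₂ hL₂ hiso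
    obtain ⟨π, hπ⟩ := hiso
    have P₁ := lattice_por L₁
    have P₂ := lattice_por L₂
    have hdep2 : ∀ j : Fin n, 0 < (j : ℕ) →
        dep L₂.le ⟨1, ht0⟩ j = dep L₁.le ⟨1, ht0⟩ j :=
      dep_eq_of_iso (z := ⟨0, hz0⟩) P₁ P₂ rfl hB₁ hB₂ hL₁ hL₂ π hπ
    by_cases hall : ∀ (j : Fin n) (e : ℕ), 0 < (j : ℕ) → 1 ≤ e → e < dep L₁.le ⟨1, ht0⟩ j →
        covwt L₁.le ⟨1, ht0⟩ e j = covwt L₂.le ⟨1, ht0⟩ e j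
    · right; left
      have hcov := cov_eq_of_data (z := ⟨0, hz0⟩) (o := ⟨1, ht0⟩) P₁ P₂ rfl hB₁ hB₂ hdep2 hall
      intro x y
      constructor
      · exact le_imp_of_cov_eq (z := ⟨0, hz0⟩) (o := ⟨1, ht0⟩) P₁ P₂ rfl hB₁ hB₂ hcov x y
      · exact le_imp_of_cov_eq (z := ⟨0, hz0⟩) (o := ⟨1, ht0⟩) P₂ P₁ rfl hB₂ hB₁
          (fun x hx => (hcov x hx).symm) x y
    · push_neg at hall
      have hKne : {m : ℕ | ∃ (j : Fin n) (e : ℕ), 0 < (j : ℕ) ∧ 1 ≤ e ∧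
          e < dep L₁.le ⟨1, ht0⟩ j ∧
          covwt L₁.le ⟨1, ht0⟩ e j ≠ covwt L₂.le ⟨1, ht0⟩ e j ∧
          kappa n (dep L₁.le ⟨1, ht0⟩ j) e j = m}.Nonempty := by
        obtain ⟨j, e, h1, h2, h3, h4⟩ := hall
        exact ⟨_, j, e, h1, h2, h3, h4, rfl⟩
      obtain ⟨i, d, hi, hd1, hdlt, hne0, hkmin⟩ := Nat.sInf_mem hKne
      have hmineq : ∀ (j : Fin n) (e : ℕ), 0 < (j : ℕ) → 1 ≤ e →
          e < dep L₁.le ⟨1, ht0⟩ j →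
          (dep L₁.le ⟨1, ht0⟩ j < dep L₁.le ⟨1, ht0⟩ i ∨
            (dep L₁.le ⟨1, ht0⟩ j = dep L₁.le ⟨1, ht0⟩ i ∧ d < e) ∨
            (dep L₁.le ⟨1, ht0⟩ j = dep L₁.le ⟨1, ht0⟩ i ∧ e = d ∧ (j : ℕ) < (i : ℕ))) →
          covwt L₁.le ⟨1, ht0⟩ e j = covwt L₂.le ⟨1, ht0⟩ e j := by
        intro j e hj he hedep hcond
        by_contra hne2
        have hmem : kappa n (dep L₁.le ⟨1, ht0⟩ j) e j ∈
            {m : ℕ | ∃ (j : Fin n) (e : ℕ), 0 < (j : ℕ) ∧ 1 ≤ e ∧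
              e < dep L₁.le ⟨1, ht0⟩ j ∧
              covwt L₁.le ⟨1, ht0⟩ e j ≠ covwt L₂.le ⟨1, ht0⟩ e j ∧
              kappa n (dep L₁.le ⟨1, ht0⟩ j) e j = m} := ⟨j, e, hj, he, hedep, hne2, rfl⟩
        have hle := Nat.sInf_le hmem
        have hen : e ≤ n := by
          have := dep_lt_N (z := (⟨0, hz0⟩ : Fin n)) P₁ hB₁ j
          omega
        have hdn : d ≤ n := by
          have := dep_lt_N (z := (⟨0, hz0⟩ : Fin n)) P₁ hB₁ i
          omega
        have hklt : kappa n (dep L₁.le ⟨1, ht0⟩ j) e j <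
            kappa n (dep L₁.le ⟨1, ht0⟩ i) d i :=
          kappa_lt j.isLt i.isLt hen hdn hcond
        omega
      rcases Nat.lt_or_ge (covwt L₁.le ⟨1, ht0⟩ d i) (covwt L₂.le ⟨1, ht0⟩ d i) with h | h
      · exact Or.inl ⟨i, d, hi, hd1, hdlt, h, hmineq⟩
      · right; right
        have hgt : covwt L₂.le ⟨1, ht0⟩ d i < covwt L₁.le ⟨1, ht0⟩ d i := by omega
        refine ⟨i, d, hi, hd1, ?_, hgt, ?_⟩
        · rw [hdep2 i hi]; exact hdlt
        · intro j e hj he hedepX hcondX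
          have hedep : e < dep L₁.le ⟨1, ht0⟩ j := by
            rw [← hdep2 j hj]; exact hedepX
          have hcond : (dep L₁.le ⟨1, ht0⟩ j < dep L₁.le ⟨1, ht0⟩ i ∨
              (dep L₁.le ⟨1, ht0⟩ j = dep L₁.le ⟨1, ht0⟩ i ∧ d < e) ∨
              (dep L₁.le ⟨1, ht0⟩ j = dep L₁.le ⟨1, ht0⟩ i ∧ e = d ∧ (j : ℕ) < (i : ℕ))) := by
            rw [← hdep2 j hj, ← hdep2 i hi]; exact hcondX
          exact (hmineq j e hj he hedep hcond).symm

end PaperLattice
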